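/- Let φ : ℝ → ℝ be a Schwartz function. Then there is a constant C = C(φ) such that for all ρ ≥ 1 and all y ∈ ℝ: |φ(ρ y) − φ(ρ sinh y)| ≤ C ρ^{−2} (1 + (ρ y)²)^{−1}. -/

import Mathlib

open Real

lemma cosh_one_lt_two : Real.cosh 1 < 2 := by
  rw [Real.cosh_eq]
  have h1 : Real.exp 1 < 2.7182818286 := Real.exp_one_lt_d9
  have h2 : Real.exp (-1) < 1 := by
    rw [Real.exp_lt_one_iff]; norm_num
  linarith

lemma sinh_le_two_mul : ∀ t ∈ Set.Icc (0:ℝ) 1, Real.sinh t ≤ 2 * t := by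
  have hmono : MonotoneOn (fun t => 2 * t - Real.sinh t) (Set.Icc (0:ℝ) 1) := by
    apply monotoneOn_of_deriv_nonneg (convex_Icc 0 1)
    · exact (by fun_prop : Continuous fun t : ℝ => 2 * t - Real.sinh t).continuousOn
    · exact (by fun_prop : Differentiable ℝ fun t : ℝ => 2 * t - Real.sinh t).differentiableOn
    · intro x hx
      rw [interior_Icc, Set.mem_Ioo] at hx
      have h : HasDerivAt (fun t : ℝ => 2 * t - Real.sinh t) (2 * 1 - Real.cosh x) x :=
        ((hasDerivAt_id x).const_mul 2).sub (Real.hasDerivAt_sinh x)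
      rw [h.deriv]
      have : Real.cosh x ≤ Real.cosh 1 := by
        rw [Real.cosh_le_cosh, abs_of_nonneg hx.1.le]
        rw [abs_one]; exact hx.2.le
      nlinarith [cosh_one_lt_two]
  intro t ht
  have := hmono (Set.left_mem_Icc.2 zero_le_one) ht ht.1
  simpa using this

lemma cosh_le_one_add_sq : ∀ t ∈ Set.Icc (0:ℝ) 1, Real.cosh t ≤ 1 + t ^ 2 := by
  have hmono : MonotoneOn (fun t => 1 + t ^ 2 - Real.cosh t) (Set.Icc (0:ℝ) 1) := by
    apply monotoneOn_of_deriv_nonneg (convex_Icc 0 1)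
    · exact (by fun_prop : Continuous fun t : ℝ => 1 + t ^ 2 - Real.cosh t).continuousOn
    · exact (by fun_prop : Differentiable ℝ fun t : ℝ => 1 + t ^ 2 - Real.cosh t).differentiableOn
    · intro x hx
      rw [interior_Icc, Set.mem_Ioo] at hx
      have h : HasDerivAt (fun t : ℝ => 1 + t ^ 2 - Real.cosh t)
          (0 + 2 * x ^ 1 - Real.sinh x) x := by
        exact ((hasDerivAt_const x (1:ℝ)).add (by simpa using hasDerivAt_pow 2 x)).sub
          (Real.hasDerivAt_cosh x)
      rw [h.deriv]
      have := sinh_le_two_mul x ⟨hx.1.le, hx.2.le⟩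
      simp only [pow_one]
      linarith
  intro t ht
  have := hmono (Set.left_mem_Icc.2 zero_le_one) ht ht.1
  simp only [Real.cosh_zero] at this
  nlinarith

lemma sinh_sub_le_cube : ∀ y ∈ Set.Icc (0:ℝ) 1, Real.sinh y - y ≤ y ^ 3 := by
  have hmono : MonotoneOn (fun t => t ^ 3 + t - Real.sinh t) (Set.Icc (0:ℝ) 1) := by
    apply monotoneOn_of_deriv_nonneg (convex_Icc 0 1)
    · exact (by fun_prop : Continuous fun t : ℝ => t ^ 3 + t - Real.sinh t).continuousOn
    · exact (by fun_prop : Differentiable ℝ fun t : ℝ => t ^ 3 + t - Real.sinh t).differentiableOn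
    · intro x hx
      rw [interior_Icc, Set.mem_Ioo] at hx
      have h : HasDerivAt (fun t : ℝ => t ^ 3 + t - Real.sinh t)
          ((3 : ℕ) * x ^ (3 - 1) + 1 - Real.cosh x) x :=
        ((hasDerivAt_pow 3 x).add (hasDerivAt_id x)).sub (Real.hasDerivAt_sinh x)
      rw [h.deriv]
      have := cosh_le_one_add_sq x ⟨hx.1.le, hx.2.le⟩
      norm_num
      nlinarith
  intro t ht
  have := hmono (Set.left_mem_Icc.2 zero_le_one) ht ht.1
  simp only [Real.sinh_zero] at this
  nlinarith

lemma abs_sinh_sub_le_cube {y : ℝ} (hy : |y| ≤ 1) : |Real.sinh y - y| ≤ |y| ^ 3 := by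
  have h := sinh_sub_le_cube |y| ⟨abs_nonneg y, hy⟩
  have hge : |y| ≤ Real.sinh |y| := by
    rw [Real.self_le_sinh_iff]; exact abs_nonneg y
  rcases le_total 0 y with h0 | h0
  · rw [abs_of_nonneg h0] at h hge ⊢
    rw [abs_of_nonneg (by linarith)]
    linarith
  · rw [abs_of_nonpos h0] at h hge ⊢
    rw [Real.sinh_neg] at h hge
    rw [abs_of_nonpos (by linarith)]
    linarith

/-- pointwise coefficient approximation:
`|φ(ρy) - φ(ρ sinh y)| ≤ C ρ^{-2} ⟨ρy⟩^{-2}`. -/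
theorem stmt_5 (φ : SchwartzMap ℝ ℝ) :
    ∃ C : ℝ, 0 < C ∧ ∀ ρ : ℝ, 1 ≤ ρ → ∀ y : ℝ,
      |φ (ρ * y) - φ (ρ * Real.sinh y)| ≤ C * (ρ ^ 2)⁻¹ * (1 + (ρ * y) ^ 2)⁻¹ := by
  set C₀ : ℝ :=
    2 ^ 6 * ((Finset.Iic ((6:ℕ), (1:ℕ))).sup (fun m => SchwartzMap.seminorm ℝ m.1 m.2) φ)
    with hC₀def
  have hC₀nn : 0 ≤ C₀ := by
    apply mul_nonneg (by norm_num)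
    exact apply_nonneg _ _
  have hbound1 : ∀ x : ℝ, (1 + ‖x‖) ^ 6 * ‖iteratedFDeriv ℝ 1 (⇑φ) x‖ ≤ C₀ := fun x =>
    SchwartzMap.one_add_le_sup_seminorm_apply (𝕜 := ℝ) (m := (6, 1)) le_rfl le_rfl φ x
  have hbound0 : ∀ x : ℝ, (1 + ‖x‖) ^ 4 * ‖iteratedFDeriv ℝ 0 (⇑φ) x‖ ≤ C₀ := fun x =>
    SchwartzMap.one_add_le_sup_seminorm_apply (𝕜 := ℝ) (m := (6, 1)) (by norm_num) (by norm_num)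
      φ x
  -- pointwise decay of `φ`
  have hφ : ∀ x : ℝ, |φ x| * (1 + x ^ 2) ^ 2 ≤ C₀ := by
    intro x
    have h := hbound0 x
    rw [norm_iteratedFDeriv_zero] at h
    have h1 : (1 + x ^ 2) ^ 2 ≤ (1 + ‖x‖) ^ 4 := by
      have h2 : (1 + x ^ 2) ≤ (1 + ‖x‖) ^ 2 := by
        rw [Real.norm_eq_abs]
        nlinarith [abs_nonneg x, sq_abs x]
      calc (1 + x ^ 2) ^ 2 ≤ ((1 + ‖x‖) ^ 2) ^ 2 := by
            apply pow_le_pow_left₀ (by positivity) h2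
        _ = (1 + ‖x‖) ^ 4 := by ring
    calc |φ x| * (1 + x ^ 2) ^ 2 ≤ ‖φ x‖ * (1 + ‖x‖) ^ 4 := by
          rw [Real.norm_eq_abs]
          exact mul_le_mul_of_nonneg_left h1 (abs_nonneg _)
      _ ≤ C₀ := by rw [mul_comm]; exact h
  -- pointwise decay of `deriv φ`
  have hφ' : ∀ x : ℝ, ‖deriv (⇑φ) x‖ * (1 + x ^ 2) ^ 3 ≤ C₀ := by
    intro x
    have h := hbound1 x
    have heq : ‖fderiv ℝ (⇑φ) x‖ = ‖iteratedFDeriv ℝ 1 (⇑φ) x‖ := by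
      have h2 := norm_iteratedFDeriv_fderiv (𝕜 := ℝ) (f := ⇑φ) (x := x) (n := 0)
      simpa [norm_iteratedFDeriv_zero] using h2
    have hd : ‖deriv (⇑φ) x‖ ≤ ‖fderiv ℝ (⇑φ) x‖ := by
      rw [← fderiv_apply_one_eq_deriv]
      calc ‖fderiv ℝ (⇑φ) x 1‖ ≤ ‖fderiv ℝ (⇑φ) x‖ * ‖(1:ℝ)‖ :=
            ContinuousLinearMap.le_opNorm _ _
        _ = ‖fderiv ℝ (⇑φ) x‖ := by simp
    have h1 : (1 + x ^ 2) ^ 3 ≤ (1 + ‖x‖) ^ 6 := by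
      have h2 : (1 + x ^ 2) ≤ (1 + ‖x‖) ^ 2 := by
        rw [Real.norm_eq_abs]
        nlinarith [abs_nonneg x, sq_abs x]
      calc (1 + x ^ 2) ^ 3 ≤ ((1 + ‖x‖) ^ 2) ^ 3 := by
            apply pow_le_pow_left₀ (by positivity) h2
        _ = (1 + ‖x‖) ^ 6 := by ring
    calc ‖deriv (⇑φ) x‖ * (1 + x ^ 2) ^ 3 ≤ ‖iteratedFDeriv ℝ 1 (⇑φ) x‖ * (1 + ‖x‖) ^ 6 := by
          apply mul_le_mul (hd.trans heq.le) h1 (by positivity) (norm_nonneg _)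
      _ ≤ C₀ := by rw [mul_comm]; exact h
  refine ⟨2 * C₀ + 1, by linarith, ?_⟩
  intro ρ hρ y
  have hρ0 : (0:ℝ) < ρ := lt_of_lt_of_le one_pos hρ
  set a : ℝ := ρ * y with ha
  set b : ℝ := ρ * Real.sinh y with hb
  have hpa : (0:ℝ) < 1 + a ^ 2 := by positivity
  have hsy : |y| ≤ |Real.sinh y| := by
    rw [Real.abs_sinh]
    exact (Real.self_le_sinh_iff).2 (abs_nonneg y)
  have hab2 : a ^ 2 ≤ b ^ 2 := by
    have : y ^ 2 ≤ Real.sinh y ^ 2 := by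
      nlinarith [sq_abs y, sq_abs (Real.sinh y), abs_nonneg y]
    rw [ha, hb, mul_pow, mul_pow]
    nlinarith [sq_nonneg ρ]
  have key : |φ a - φ b| * (ρ ^ 2 * (1 + a ^ 2)) ≤ 2 * C₀ + 1 := by
    rcases le_total 1 |y| with h1y | h1y
    · -- |y| ≥ 1 : use decay of φ itself
      have habs : |φ a - φ b| ≤ |φ a| + |φ b| := abs_sub _ _
      have hρa : ρ ^ 2 ≤ 1 + a ^ 2 := by
        have : ρ ^ 2 ≤ a ^ 2 := by
          rw [ha, mul_pow]
          have hy2 : 1 ≤ y ^ 2 := by nlinarith [sq_abs y]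
          nlinarith [sq_nonneg ρ]
        linarith
      calc |φ a - φ b| * (ρ ^ 2 * (1 + a ^ 2))
          ≤ (|φ a| + |φ b|) * ((1 + a ^ 2) * (1 + a ^ 2)) := by
            apply mul_le_mul habs ?_ (by positivity) (by positivity)
            exact mul_le_mul_of_nonneg_right hρa hpa.le
        _ = |φ a| * (1 + a ^ 2) ^ 2 + |φ b| * (1 + a ^ 2) ^ 2 := by ring
        _ ≤ C₀ + C₀ := by
            apply add_le_add (hφ a)
            calc |φ b| * (1 + a ^ 2) ^ 2 ≤ |φ b| * (1 + b ^ 2) ^ 2 := by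
                  apply mul_le_mul_of_nonneg_left ?_ (abs_nonneg _)
                  apply pow_le_pow_left₀ hpa.le (by linarith)
              _ ≤ C₀ := hφ b
        _ ≤ 2 * C₀ + 1 := by linarith
    · -- |y| ≤ 1 : mean value theorem
      have hxin : ∀ x ∈ Set.uIcc a b, a ^ 2 ≤ x ^ 2 := by
        intro x hx
        rw [Set.mem_uIcc] at hx
        rcases le_total 0 y with h0 | h0
        · have ha0 : 0 ≤ a := by positivity
          have hle : a ≤ b := by
            rw [ha, hb]
            exact mul_le_mul_of_nonneg_left ((Real.self_le_sinh_iff).2 h0) hρ0.le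
          rcases hx with ⟨h1, _⟩ | ⟨h1, h2⟩ <;> nlinarith
        · have ha0 : a ≤ 0 := mul_nonpos_of_nonneg_of_nonpos hρ0.le h0
          have hle : b ≤ a := by
            rw [ha, hb]
            exact mul_le_mul_of_nonneg_left ((Real.sinh_le_self_iff).2 h0) hρ0.le
          rcases hx with ⟨h1, h2⟩ | ⟨h1, _⟩ <;> nlinarith
      have hder : ∀ x ∈ Set.uIcc a b, ‖deriv (⇑φ) x‖ ≤ C₀ / (1 + a ^ 2) ^ 3 := by
        intro x hx
        rw [le_div_iff₀ (by positivity)]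
        calc ‖deriv (⇑φ) x‖ * (1 + a ^ 2) ^ 3 ≤ ‖deriv (⇑φ) x‖ * (1 + x ^ 2) ^ 3 := by
              apply mul_le_mul_of_nonneg_left ?_ (norm_nonneg _)
              apply pow_le_pow_left₀ hpa.le
              linarith [hxin x hx]
          _ ≤ C₀ := hφ' x
      have hmvt := Convex.norm_image_sub_le_of_norm_deriv_le
        (fun x _ => φ.differentiable.differentiableAt) hder (convex_uIcc a b)
        (Set.right_mem_uIcc) (Set.left_mem_uIcc)
      have hdiff : ‖a - b‖ ≤ ρ * |y| ^ 3 := by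
        have h1 : |y - Real.sinh y| ≤ |y| ^ 3 := by
          rw [abs_sub_comm]
          exact abs_sinh_sub_le_cube h1y
        calc ‖a - b‖ = |ρ| * |y - Real.sinh y| := by
              rw [Real.norm_eq_abs, ha, hb, ← mul_sub, abs_mul]
          _ ≤ ρ * |y| ^ 3 := by
              rw [abs_of_pos hρ0]
              exact mul_le_mul_of_nonneg_left h1 hρ0.le
      have hmvt' : |φ a - φ b| ≤ C₀ / (1 + a ^ 2) ^ 3 * (ρ * |y| ^ 3) := by
        calc |φ a - φ b| = ‖φ a - φ b‖ := (Real.norm_eq_abs _).symm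
          _ ≤ C₀ / (1 + a ^ 2) ^ 3 * ‖a - b‖ := hmvt
          _ ≤ C₀ / (1 + a ^ 2) ^ 3 * (ρ * |y| ^ 3) := by
              apply mul_le_mul_of_nonneg_left hdiff (by positivity)
      have hcube : ρ ^ 3 * |y| ^ 3 ≤ (1 + a ^ 2) ^ 2 := by
        have hta : ρ * |y| = |a| := by
          rw [ha, abs_mul, abs_of_pos hρ0]
        have h2 : ρ ^ 3 * |y| ^ 3 = |a| ^ 3 := by
          rw [← hta]; ring
        rw [h2]
        nlinarith [sq_abs a, abs_nonneg a, sq_nonneg (|a| - 1)]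
      calc |φ a - φ b| * (ρ ^ 2 * (1 + a ^ 2))
          ≤ C₀ / (1 + a ^ 2) ^ 3 * (ρ * |y| ^ 3) * (ρ ^ 2 * (1 + a ^ 2)) := by
            apply mul_le_mul_of_nonneg_right hmvt' (by positivity)
        _ = C₀ * (ρ ^ 3 * |y| ^ 3) / (1 + a ^ 2) ^ 2 := by
            field_simp
        _ ≤ C₀ * (1 + a ^ 2) ^ 2 / (1 + a ^ 2) ^ 2 := by gcongr
        _ = C₀ := by field_simp
        _ ≤ 2 * C₀ + 1 := by linarith
  have hfin := (le_div_iff₀ (by positivity : (0:ℝ) < ρ ^ 2 * (1 + a ^ 2))).2 key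
  calc |φ a - φ b| ≤ (2 * C₀ + 1) / (ρ ^ 2 * (1 + a ^ 2)) := hfin
    _ = (2 * C₀ + 1) * (ρ ^ 2)⁻¹ * (1 + a ^ 2)⁻¹ := by
        rw [div_eq_mul_inv, mul_inv, ← mul_assoc]
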